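/- arXiv:1607.00261 — 4 statements merged into one kernel-verified Lean document; each statement's English description precedes it below -/
import Mathlib

section
/- For θ ∈ [0, π/2], let M^θ = {M^θ_{−1}, M^θ_0, M^θ_1} be the three-outcome POVM on ℂ² with M^θ_m = p_m·(I + n_m·σ), where n_m = ((−1)^m·cos(mθ), 0, sin(mθ)), p_0 = cos θ/(1 + cos θ) and p_{−1} = p_1 = 1/(2(1 + cos θ)). Then M^θ is a valid POVM and its noise with respect to the Pauli observable σ_z equals N(M^θ, σ_z) = (cos θ + h(sin θ))/(1 + cos θ). -/
open Matrix
open scoped ComplexOrder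

noncomputable section

/-- The binary-entropy-type function `h(x) = -((1+x)/2)·log₂((1+x)/2) - ((1-x)/2)·log₂((1-x)/2)`
(with the convention `0·log₂ 0 = 0`, automatic since `Real.logb 2 0 = 0`). -/
def hFun (x : ℝ) : ℝ :=
  -(((1 + x) / 2) * Real.logb 2 ((1 + x) / 2)) - ((1 - x) / 2) * Real.logb 2 ((1 - x) / 2)

/-- `g : [0,1] → [0,1]` is the inverse of `h` on `[0,1]`. -/
def gFun : ℝ → ℝ := Function.invFunOn hFun (Set.Icc 0 1)

/-- The (real) quadratic form `⟨v|M|v⟩`. -/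
def qform {d : ℕ} (M : Matrix (Fin d) (Fin d) ℂ) (v : Fin d → ℂ) : ℝ :=
  (star v ⬝ᵥ M.mulVec v).re

/-- `v` is an orthonormal basis (family) of `ℂ^d`. -/
def IsONB {d : ℕ} (v : Fin d → Fin d → ℂ) : Prop :=
  ∀ i j, star (v i) ⬝ᵥ v j = if i = j then 1 else 0

/-- A POVM: a finite family of positive semidefinite matrices summing to the identity. -/
def IsPOVM {d : ℕ} {ι : Type*} [Fintype ι] (M : ι → Matrix (Fin d) (Fin d) ℂ) : Prop :=
  (∀ m, (M m).PosSemidef) ∧ ∑ m, M m = 1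

/-- A density matrix: positive semidefinite with trace 1. -/
def IsDensity {d : ℕ} (ρ : Matrix (Fin d) (Fin d) ℂ) : Prop :=
  ρ.PosSemidef ∧ ρ.trace = 1

/-- The noise `N(M,A) = -Σ_{m,a} p(m,a)·log₂(p(m,a)/p(m))` with `p(m,a) = (1/d)·⟨a|M_m|a⟩`
and `p(m) = (1/d)·Tr[M_m]`, for an observable `A` with orthonormal eigenbasis `v`. -/
def noise {d : ℕ} {ι : Type*} [Fintype ι] (M : ι → Matrix (Fin d) (Fin d) ℂ)
    (v : Fin d → Fin d → ℂ) : ℝ :=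
  -∑ m, ∑ a, ((1 / (d : ℝ)) * qform (M m) (v a)) *
      Real.logb 2 (((1 / (d : ℝ)) * qform (M m) (v a)) / ((1 / (d : ℝ)) * (M m).trace.re))

/-- `H(A|ρ) = -Σ_a ⟨a|ρ|a⟩·log₂⟨a|ρ|a⟩` for an observable with orthonormal eigenbasis `v`. -/
def Hobs {d : ℕ} (v : Fin d → Fin d → ℂ) (ρ : Matrix (Fin d) (Fin d) ℂ) : ℝ :=
  -∑ a, qform ρ (v a) * Real.logb 2 (qform ρ (v a))

/-- Conditional Shannon entropy `H(X|Y) = -Σ_{x,y} p(x,y)·log₂(p(x,y)/p(y))` of a finite joint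
distribution, conditioning on the second variable. -/
def condEnt {X Y : Type*} [Fintype X] [Fintype Y] (p : X → Y → ℝ) : ℝ :=
  -∑ x, ∑ y, p x y * Real.logb 2 (p x y / ∑ x', p x' y)

/-- Pauli matrix σ_x. -/
def σx : Matrix (Fin 2) (Fin 2) ℂ := !![0, 1; 1, 0]
/-- Pauli matrix σ_y. -/
def σy : Matrix (Fin 2) (Fin 2) ℂ := !![0, -Complex.I; Complex.I, 0]
/-- Pauli matrix σ_z. -/
def σz : Matrix (Fin 2) (Fin 2) ℂ := !![1, 0; 0, -1]

/-- `v·σ = v₁σ_x + v₂σ_y + v₃σ_z` for `v ∈ ℝ³`. -/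
def vecσ (v : Fin 3 → ℝ) : Matrix (Fin 2) (Fin 2) ℂ :=
  (v 0 : ℂ) • σx + (v 1 : ℂ) • σy + (v 2 : ℂ) • σz

/-- The canonical orthonormal eigenbasis of σ_z. -/
def basisZ : Fin 2 → Fin 2 → ℂ := fun i j => if i = j then 1 else 0

/-- The canonical orthonormal eigenbasis `|±x⟩` of σ_x. -/
def basisX : Fin 2 → Fin 2 → ℂ := fun i =>
  ![((1 / Real.sqrt 2 : ℝ) : ℂ),
    if i = 0 then ((1 / Real.sqrt 2 : ℝ) : ℂ) else (-(1 / Real.sqrt 2 : ℝ) : ℂ)]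

/-- Eigenvalues `+1, -1` of a (nondegenerate) Pauli observable. -/
def pmEig : Fin 2 → ℂ := fun i => if i = 0 then 1 else -1

end
noncomputable section
lemma Mform (p n1 n3 : ℝ) :
    ((p : ℝ) : ℂ) • (1 + vecσ ![n1, 0, n3]) =
    !![((p*(1+n3) : ℝ) : ℂ), ((p*n1 : ℝ) : ℂ); ((p*n1 : ℝ) : ℂ), ((p*(1-n3) : ℝ) : ℂ)] := by
  ext i j
  fin_cases i <;> fin_cases j <;>
    simp [vecσ, σx, σy, σz, Matrix.one_apply] <;>
    first
      | tauto
      | (push_cast; ring)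

lemma psd_aux (p n1 n3 : ℝ) (hp : 0 ≤ p) (hn : n1^2 + n3^2 ≤ 1) :
    (!![((p*(1+n3) : ℝ) : ℂ), ((p*n1 : ℝ) : ℂ); ((p*n1 : ℝ) : ℂ), ((p*(1-n3) : ℝ) : ℂ)] :
      Matrix (Fin 2) (Fin 2) ℂ).PosSemidef := by
  set A : Matrix (Fin 2) (Fin 2) ℂ :=
    !![((p*(1+n3) : ℝ) : ℂ), ((p*n1 : ℝ) : ℂ); ((p*n1 : ℝ) : ℂ), ((p*(1-n3) : ℝ) : ℂ)] with hA
  rw [Matrix.posSemidef_iff_dotProduct_mulVec]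
  constructor
  · ext i j
    fin_cases i <;> fin_cases j <;> simp [hA, Matrix.conjTranspose_apply]
  · intro x
    have hx : star x ⬝ᵥ A.mulVec x =
        starRingEnd ℂ (x 0) * (((p*(1+n3) : ℝ) : ℂ) * x 0 + ((p*n1 : ℝ) : ℂ) * x 1) +
        starRingEnd ℂ (x 1) * (((p*n1 : ℝ) : ℂ) * x 0 + ((p*(1-n3) : ℝ) : ℂ) * x 1) := by
      simp [hA, dotProduct, Matrix.mulVec, Fin.sum_univ_two]
    rw [hx, Complex.le_def]
    set a := (x 0).re with ha; set b := (x 0).im with hb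
    set c := (x 1).re with hc; set d := (x 1).im with hd
    have hQ : 0 ≤ (1+n3)*(a^2+b^2) + 2*n1*(a*c+b*d) + (1-n3)*(c^2+d^2) := by
      nlinarith [sq_nonneg ((1+n3)*a + n1*c), sq_nonneg ((1+n3)*b + n1*d),
        sq_nonneg ((1-n3)*c + n1*a), sq_nonneg ((1-n3)*d + n1*b),
        mul_nonneg (by nlinarith : (0:ℝ) ≤ 1 - n1^2 - n3^2)
          (by positivity : (0:ℝ) ≤ a^2+b^2+c^2+d^2)]
    have hpq := mul_nonneg hp hQ
    constructor
    · simp only [Complex.add_re, Complex.add_im, Complex.mul_re, Complex.mul_im,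
        Complex.ofReal_re, Complex.ofReal_im, Complex.conj_re, Complex.conj_im,
        Complex.zero_re, ← ha, ← hb, ← hc, ← hd]
      nlinarith [hpq]
    · simp only [Complex.add_re, Complex.add_im, Complex.mul_re, Complex.mul_im,
        Complex.ofReal_re, Complex.ofReal_im, Complex.conj_re, Complex.conj_im,
        Complex.zero_im, ← ha, ← hb, ← hc, ← hd]
      ring

lemma logb_half : Real.logb 2 (1/2) = -1 := by
  rw [show (1/2 : ℝ) = 2⁻¹ by norm_num, Real.logb_inv,
    Real.logb_self_eq_one (by norm_num)]

lemma noise_arith (c s : ℝ) (hc : 0 ≤ c) (h1c : (0:ℝ) < 1 + c) :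
    -(1 / 2 * (1 / (2 * (1 + c)) * (1 + -s)) *
              Real.logb 2
                (1 / 2 * (1 / (2 * (1 + c)) * (1 + -s)) /
                  (1 / 2 *
                    (1 / (2 * (1 + c)) * (1 + -s) +
                      1 / (2 * (1 + c)) * (1 - -s)))) +
            1 / 2 * (1 / (2 * (1 + c)) * (1 - -s)) *
              Real.logb 2
                (1 / 2 * (1 / (2 * (1 + c)) * (1 - -s)) /
                  (1 / 2 *
                    (1 / (2 * (1 + c)) * (1 + -s) +
                      1 / (2 * (1 + c)) * (1 - -s)))) +
          (1 / 2 * (c / (1 + c) * (1 + 0)) *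
              Real.logb 2
                (1 / 2 * (c / (1 + c) * (1 + 0)) /
                  (1 / 2 * (c / (1 + c) * (1 + 0) + c / (1 + c) * (1 - 0)))) +
            1 / 2 * (c / (1 + c) * (1 - 0)) *
              Real.logb 2
                (1 / 2 * (c / (1 + c) * (1 - 0)) /
                  (1 / 2 * (c / (1 + c) * (1 + 0) + c / (1 + c) * (1 - 0))))) +
        (1 / 2 * (1 / (2 * (1 + c)) * (1 + s)) *
            Real.logb 2
              (1 / 2 * (1 / (2 * (1 + c)) * (1 + s)) /
                (1 / 2 *
                  (1 / (2 * (1 + c)) * (1 + s) + 1 / (2 * (1 + c)) * (1 - s)))) +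
          1 / 2 * (1 / (2 * (1 + c)) * (1 - s)) *
            Real.logb 2
              (1 / 2 * (1 / (2 * (1 + c)) * (1 - s)) /
                (1 / 2 *
                  (1 / (2 * (1 + c)) * (1 + s) + 1 / (2 * (1 + c)) * (1 - s)))))) =
    (c + hFun s) / (1 + c) := by
  have h1c' : (1 + c) ≠ 0 := ne_of_gt h1c
  have hD1 : 1/2 * (1/(2*(1+c))*(1+-s) + 1/(2*(1+c))*(1 - -s)) = 1/(2*(1+c)) := by ring
  have hD2 : 1/2 * (1/(2*(1+c))*(1+s) + 1/(2*(1+c))*(1-s)) = 1/(2*(1+c)) := by ring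
  have hDq : 1/2 * (c/(1+c)*(1+0) + c/(1+c)*(1-0)) = c/(1+c) := by ring
  rw [hD1, hD2, hDq]
  have hp : (0:ℝ) < 1/(2*(1+c)) := by positivity
  have r1 : 1/2 * (1/(2*(1+c))*(1+-s)) / (1/(2*(1+c))) = (1-s)/2 := by
    rw [div_eq_iff hp.ne']; ring
  have r2 : 1/2 * (1/(2*(1+c))*(1 - -s)) / (1/(2*(1+c))) = (1+s)/2 := by
    rw [div_eq_iff hp.ne']; ring
  have r3 : 1/2 * (1/(2*(1+c))*(1+s)) / (1/(2*(1+c))) = (1+s)/2 := by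
    rw [div_eq_iff hp.ne']; ring
  have r4 : 1/2 * (1/(2*(1+c))*(1-s)) / (1/(2*(1+c))) = (1-s)/2 := by
    rw [div_eq_iff hp.ne']; ring
  rw [r1, r2, r3, r4]
  by_cases hc0 : c = 0
  · subst hc0
    simp only [hFun]
    norm_num
    ring
  · have hq : c/(1+c) ≠ 0 := by positivity
    have rm1 : 1/2 * (c/(1+c)*(1+0)) / (c/(1+c)) = 1/2 := by
      rw [div_eq_iff hq]; ring
    have rm2 : 1/2 * (c/(1+c)*(1-0)) / (c/(1+c)) = 1/2 := by
      rw [div_eq_iff hq]; ring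
    rw [rm1, rm2, logb_half]
    simp only [hFun]
    field_simp
    ring

lemma qform_basisZ (A : Matrix (Fin 2) (Fin 2) ℂ) (a : Fin 2) :
    qform A (basisZ a) = (A a a).re := by
  fin_cases a <;>
    simp [qform, basisZ, dotProduct, Matrix.mulVec, Fin.sum_univ_two]
end

/-- The three-outcome family `M^θ` (outcomes `m ∈ {−1,0,1}` encoded as `i ∈ Fin 3` with
`m = i − 1`), with `M^θ_m = p_m·(I + n_m·σ)`, `n_m = ((−1)^m·cos(mθ), 0, sin(mθ))`,
`p_0 = cos θ/(1 + cos θ)`, `p_{±1} = 1/(2(1 + cos θ))`, is a valid POVM, and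
`N(M^θ, σ_z) = (cos θ + h(sin θ))/(1 + cos θ)`. -/
theorem stmt_13 (θ : ℝ) (hθ : θ ∈ Set.Icc 0 (Real.pi / 2))
    (M : Fin 3 → Matrix (Fin 2) (Fin 2) ℂ)
    (hMdef : ∀ i : Fin 3, M i =
      ((if i = 1 then Real.cos θ / (1 + Real.cos θ)
        else 1 / (2 * (1 + Real.cos θ)) : ℝ) : ℂ) •
      (1 + vecσ ![(-1 : ℝ) ^ ((i : ℤ) - 1) * Real.cos ((((i : ℤ) - 1 : ℤ) : ℝ) * θ), 0,
                  Real.sin ((((i : ℤ) - 1 : ℤ) : ℝ) * θ)])) :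
    IsPOVM M ∧
    noise M basisZ = (Real.cos θ + hFun (Real.sin θ)) / (1 + Real.cos θ) := by
  obtain ⟨hθ0, hθ1⟩ := hθ
  have hc0 : 0 ≤ Real.cos θ := Real.cos_nonneg_of_mem_Icc
    ⟨by linarith [Real.pi_pos], hθ1⟩
  have hs0 : 0 ≤ Real.sin θ := Real.sin_nonneg_of_nonneg_of_le_pi hθ0
    (by linarith [Real.pi_pos])
  have h1c : (0:ℝ) < 1 + Real.cos θ := by linarith
  have hv0 : ![(-1 : ℝ) ^ (((0 : Fin 3) : ℤ) - 1) *
        Real.cos (((((0 : Fin 3) : ℤ) - 1 : ℤ) : ℝ) * θ), 0,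
        Real.sin (((((0 : Fin 3) : ℤ) - 1 : ℤ) : ℝ) * θ)]
      = ![-Real.cos θ, 0, -Real.sin θ] := by
    funext i; fin_cases i <;> norm_num [Real.cos_neg, Real.sin_neg]
  have hv1 : ![(-1 : ℝ) ^ (((1 : Fin 3) : ℤ) - 1) *
        Real.cos (((((1 : Fin 3) : ℤ) - 1 : ℤ) : ℝ) * θ), 0,
        Real.sin (((((1 : Fin 3) : ℤ) - 1 : ℤ) : ℝ) * θ)]
      = ![1, 0, 0] := by
    funext i; fin_cases i <;> norm_num
  have hv2 : ![(-1 : ℝ) ^ (((2 : Fin 3) : ℤ) - 1) *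
        Real.cos (((((2 : Fin 3) : ℤ) - 1 : ℤ) : ℝ) * θ), 0,
        Real.sin (((((2 : Fin 3) : ℤ) - 1 : ℤ) : ℝ) * θ)]
      = ![-Real.cos θ, 0, Real.sin θ] := by
    funext i; fin_cases i <;> norm_num
  have h0 : M 0 = !![((1 / (2 * (1 + Real.cos θ)) * (1 + -Real.sin θ) : ℝ) : ℂ),
        ((1 / (2 * (1 + Real.cos θ)) * -Real.cos θ : ℝ) : ℂ);
        ((1 / (2 * (1 + Real.cos θ)) * -Real.cos θ : ℝ) : ℂ),
        ((1 / (2 * (1 + Real.cos θ)) * (1 - -Real.sin θ) : ℝ) : ℂ)] := by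
    rw [hMdef 0, hv0, if_neg (show ¬((0 : Fin 3) = 1) by decide), Mform]
  have h1 : M 1 = !![((Real.cos θ / (1 + Real.cos θ) * (1 + 0) : ℝ) : ℂ),
        ((Real.cos θ / (1 + Real.cos θ) * 1 : ℝ) : ℂ);
        ((Real.cos θ / (1 + Real.cos θ) * 1 : ℝ) : ℂ),
        ((Real.cos θ / (1 + Real.cos θ) * (1 - 0) : ℝ) : ℂ)] := by
    rw [hMdef 1, hv1, if_pos rfl, Mform]
  have h2 : M 2 = !![((1 / (2 * (1 + Real.cos θ)) * (1 + Real.sin θ) : ℝ) : ℂ),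
        ((1 / (2 * (1 + Real.cos θ)) * -Real.cos θ : ℝ) : ℂ);
        ((1 / (2 * (1 + Real.cos θ)) * -Real.cos θ : ℝ) : ℂ),
        ((1 / (2 * (1 + Real.cos θ)) * (1 - Real.sin θ) : ℝ) : ℂ)] := by
    rw [hMdef 2, hv2, if_neg (show ¬((2 : Fin 3) = 1) by decide), Mform]
  have hsc : Real.sin θ ^ 2 + Real.cos θ ^ 2 = 1 := Real.sin_sq_add_cos_sq θ
  constructor
  · constructor
    · intro m
      fin_cases m
      · show (M 0).PosSemidef
        rw [h0]; exact psd_aux _ (-Real.cos θ) (-Real.sin θ)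
          (by positivity) (by nlinarith)
      · show (M 1).PosSemidef
        rw [h1]; exact psd_aux _ 1 0 (by positivity) (by norm_num)
      · show (M 2).PosSemidef
        rw [h2]; exact psd_aux _ (-Real.cos θ) (Real.sin θ)
          (by positivity) (by nlinarith)
    · rw [Fin.sum_univ_three, h0, h1, h2]
      ext i j
      have h1c' : (1 + Real.cos θ) ≠ 0 := ne_of_gt h1c
      have hC : (1 : ℂ) + Complex.cos θ ≠ 0 := by
        rw [← Complex.ofReal_cos, ← Complex.ofReal_one, ← Complex.ofReal_add]
        exact_mod_cast h1c'
      have hC2 : (2 : ℂ) + Complex.cos θ * 2 ≠ 0 := by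
        intro h; apply hC
        have : (2 : ℂ) + Complex.cos θ * 2 = 2 * (1 + Complex.cos θ) := by ring
        rw [this] at h
        simpa using h
      fin_cases i <;> fin_cases j <;>
        · simp [Matrix.one_apply]
          field_simp
          ring
  · unfold noise
    simp only [Fin.sum_univ_three, Fin.sum_univ_two, qform_basisZ, h0, h1, h2,
      Matrix.trace_fin_two, Matrix.cons_val', Matrix.cons_val_zero, Matrix.cons_val_one,
      Matrix.head_cons, Matrix.head_fin_const, Matrix.empty_val', Matrix.cons_val_fin_one,
      Matrix.of_apply, Complex.add_re, Complex.ofReal_re, Nat.cast_ofNat]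
    exact noise_arith (Real.cos θ) (Real.sin θ) hc0 h1c
end

section
/- For θ ∈ [0, π/2], let M^θ = {M^θ_{−1}, M^θ_0, M^θ_1} be the POVM on ℂ² with M^θ_m = p_m·(I + n_m·σ), n_m = ((−1)^m·cos(mθ), 0, sin(mθ)), p_0 = cos θ/(1 + cos θ), p_{−1} = p_1 = 1/(2(1 + cos θ)). Consider the measure-and-prepare instrument with correction that, on outcome 0, leaves the post-measurement state |n_0⟩⟨n_0| = (1/2)(I + σ_x) unchanged, and on outcomes ±1 outputs the state (1/2)(I − σ_x). Let |±x⟩ denote the eigenvectors of σ_x, and define the joint distribution p(b, b') for b, b' ∈ {+,−} by p(b, b') = (1/2)·[⟨bx|M^θ_0|bx⟩·𝟙(b'=+) + (⟨bx|M^θ_{−1}|bx⟩ + ⟨bx|M^θ_1|bx⟩)·𝟙(b'=−)]. Then the corrected disturbance D_E(M^θ, σ_x) = H(𝔹|𝔹') computed from p(b,b') equals h(cos θ)/(1 + cos θ). -/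
open Matrix
open scoped ComplexOrder

lemma qform_eval (c a b : ℝ) (i : Fin 2) :
    qform ((c:ℂ) • (1 + vecσ ![a,0,b])) (basisX i) =
      c * (1 + (if i = 0 then a else -a)) := by
  have h2 : (1 / Real.sqrt 2 : ℝ) * (1 / Real.sqrt 2 : ℝ) = 1/2 := by
    rw [div_mul_div_comm, Real.mul_self_sqrt (by norm_num)]; norm_num
  fin_cases i <;>
  · simp [qform, vecσ, σx, σy, σz, basisX, Matrix.mulVec, dotProduct,
      Fin.sum_univ_two, Matrix.one_apply, Complex.ext_iff]
    ring_nf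
    rw [Real.sq_sqrt (by norm_num : (0:ℝ) ≤ 2)]
    ring

/-- For the three-outcome POVM `M^θ` and the measure-and-prepare correction which keeps the
state `(1/2)(I+σ_x)` on outcome `0` and outputs `(1/2)(I−σ_x)` on outcomes `±1`, the joint
distribution `p(b,b') = (1/2)[⟨bx|M^θ_0|bx⟩·𝟙(b'=+) + (⟨bx|M^θ_{−1}|bx⟩+⟨bx|M^θ_1|bx⟩)·𝟙(b'=−)]`
gives corrected disturbance `D_E(M^θ,σ_x) = H(𝔹|𝔹') = h(cos θ)/(1 + cos θ)`. -/
theorem stmt_14 (θ : ℝ) (hθ : θ ∈ Set.Icc 0 (Real.pi / 2))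
    (M : Fin 3 → Matrix (Fin 2) (Fin 2) ℂ)
    (hMdef : ∀ i : Fin 3, M i =
      ((if i = 1 then Real.cos θ / (1 + Real.cos θ)
        else 1 / (2 * (1 + Real.cos θ)) : ℝ) : ℂ) •
      (1 + vecσ ![(-1 : ℝ) ^ ((i : ℤ) - 1) * Real.cos ((((i : ℤ) - 1 : ℤ) : ℝ) * θ), 0,
                  Real.sin ((((i : ℤ) - 1 : ℤ) : ℝ) * θ)]))
    (pjoint : Fin 2 → Fin 2 → ℝ)
    (hpjoint : ∀ b b' : Fin 2, pjoint b b' = (1 / 2 : ℝ) *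
      (qform (M 1) (basisX b) * (if b' = 0 then 1 else 0) +
       (qform (M 0) (basisX b) + qform (M 2) (basisX b)) * (if b' = 1 then 1 else 0))) :
    condEnt pjoint = hFun (Real.cos θ) / (1 + Real.cos θ) := by
  obtain ⟨hθ0, hθ1⟩ := hθ
  set c := Real.cos θ with hc
  have hc0 : 0 ≤ c := Real.cos_nonneg_of_mem_Icc ⟨by linarith [Real.pi_pos], hθ1⟩
  have hc1 : c ≤ 1 := Real.cos_le_one θ
  have h1c : (0:ℝ) < 1 + c := by linarith
  have h1c' : (1 + c : ℝ) ≠ 0 := ne_of_gt h1c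
  -- evaluate the qforms
  have e1 : M 1 = ((c / (1 + c) : ℝ) : ℂ) • (1 + vecσ ![1, 0, 0]) := by
    rw [hMdef 1]; norm_num
  have e0 : M 0 = ((1 / (2 * (1 + c)) : ℝ) : ℂ) • (1 + vecσ ![-c, 0, -Real.sin θ]) := by
    rw [hMdef 0]; norm_num [Real.cos_neg, Real.sin_neg]; rfl
  have e2 : M 2 = ((1 / (2 * (1 + c)) : ℝ) : ℂ) • (1 + vecσ ![-c, 0, Real.sin θ]) := by
    rw [hMdef 2]; norm_num [show (2:Fin 3) ≠ 1 from by decide]; rfl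
  have hq1 : ∀ b : Fin 2, qform (M 1) (basisX b) = c / (1 + c) * (1 + if b = 0 then 1 else -1) := by
    intro b; rw [e1, qform_eval]
  have hq0 : ∀ b : Fin 2, qform (M 0) (basisX b)
      = 1 / (2 * (1 + c)) * (1 + if b = 0 then -c else c) := by
    intro b; rw [e0, qform_eval]; fin_cases b <;> norm_num
  have hq2 : ∀ b : Fin 2, qform (M 2) (basisX b)
      = 1 / (2 * (1 + c)) * (1 + if b = 0 then -c else c) := by
    intro b; rw [e2, qform_eval]; fin_cases b <;> norm_num
  -- joint distribution values
  have p00 : pjoint 0 0 = c / (1 + c) := by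
    rw [hpjoint 0 0, hq1 0]; norm_num; ring
  have p01 : pjoint 0 1 = (1 - c) / (2 * (1 + c)) := by
    rw [hpjoint 0 1, hq0 0, hq2 0]; norm_num; field_simp; try ring
  have p10 : pjoint 1 0 = 0 := by
    rw [hpjoint 1 0, hq1 1]; norm_num
  have p11 : pjoint 1 1 = 1 / 2 := by
    rw [hpjoint 1 1, hq0 1, hq2 1]; norm_num; field_simp; try ring
  rw [condEnt]
  simp only [Fin.sum_univ_two, p00, p01, p10, p11]
  have t1 : c / (1 + c) * Real.logb 2 ((c / (1 + c)) / (c / (1 + c) + 0)) = 0 := by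
    rcases eq_or_ne c 0 with h | h
    · simp [h]
    · rw [add_zero, div_self (by positivity)]
      simp
  have den : (1 - c) / (2 * (1 + c)) + 1 / 2 = 1 / (1 + c) := by
    field_simp; ring
  have r1 : ((1 - c) / (2 * (1 + c))) / ((1 - c) / (2 * (1 + c)) + 1 / 2) = (1 - c) / 2 := by
    rw [den]; field_simp; try ring
  have r2 : (1 / 2 : ℝ) / ((1 - c) / (2 * (1 + c)) + 1 / 2) = (1 + c) / 2 := by
    rw [den]; field_simp; try ring
  rw [t1, r1, r2]
  rw [hFun]
  set L1 := Real.logb 2 ((1 - c) / 2)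
  set L2 := Real.logb 2 ((1 + c) / 2)
  field_simp
  ring
end

section
/- For every θ ∈ (0, π/2), the pair N_θ = (cos θ + h(sin θ))/(1 + cos θ) and D_θ = h(cos θ)/(1 + cos θ) satisfies g(N_θ)² + g(D_θ)² > 1. (Hence the relation g(N)² + g(D)² ≤ 1 proposed by Sulyok et al. for the noise-disturbance tradeoff of orthogonal qubit observables is violated.) -/
open Matrix
open scoped ComplexOrder

section AuxStmt15

private noncomputable def auxL (u : ℝ) : ℝ := Real.log ((1 + u) / (1 - u))

private lemma aux_log2_pos : (0:ℝ) < Real.log 2 := Real.log_pos (by norm_num)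

private lemma aux_hFun_eq (x : ℝ) :
    hFun x = (Real.negMulLog ((1 + x) / 2) + Real.negMulLog ((1 - x) / 2)) / Real.log 2 := by
  have h2 : Real.log 2 ≠ 0 := aux_log2_pos.ne'
  simp only [hFun, Real.negMulLog, Real.logb]
  field_simp
  ring

private lemma aux_hFun_cont : Continuous hFun := by
  have h : hFun = fun x =>
      (Real.negMulLog ((1 + x) / 2) + Real.negMulLog ((1 - x) / 2)) / Real.log 2 :=
    funext aux_hFun_eq
  rw [h]
  apply Continuous.div_const
  exact (Real.continuous_negMulLog.comp (by continuity)).add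
    (Real.continuous_negMulLog.comp (by continuity))

private lemma aux_hFun_deriv {x : ℝ} (h1 : -1 < x) (h2 : x < 1) :
    HasDerivAt hFun (-(auxL x) / (2 * Real.log 2)) x := by
  have hp : (0:ℝ) < (1 + x) / 2 := by linarith
  have hq : (0:ℝ) < (1 - x) / 2 := by linarith
  have d1 : HasDerivAt (fun y : ℝ => (1 + y) / 2) (1 / 2) x := by
    simpa using ((hasDerivAt_id x).const_add (1:ℝ)).div_const 2
  have d2 : HasDerivAt (fun y : ℝ => (1 - y) / 2) (-(1 / 2)) x := by
    have h := (((hasDerivAt_id x).neg).const_add (1:ℝ)).div_const 2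
    simp only [sub_eq_add_neg]
    refine h.congr_deriv ?_
    norm_num
  have D1 : HasDerivAt (fun y : ℝ => Real.negMulLog ((1 + y) / 2))
      ((-Real.log ((1 + x) / 2) - 1) * (1 / 2)) x :=
    by have h := (Real.hasDerivAt_negMulLog hp.ne').comp x d1; exact h
  have D2 : HasDerivAt (fun y : ℝ => Real.negMulLog ((1 - y) / 2))
      ((-Real.log ((1 - x) / 2) - 1) * (-(1 / 2))) x :=
    by have h := (Real.hasDerivAt_negMulLog hq.ne').comp x d2; exact h
  have D := (D1.add D2).div_const (Real.log 2)
  have heq : hFun = fun y =>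
      (Real.negMulLog ((1 + y) / 2) + Real.negMulLog ((1 - y) / 2)) / Real.log 2 :=
    funext aux_hFun_eq
  rw [heq]
  refine D.congr_deriv ?_
  have hlog : auxL x = Real.log ((1 + x) / 2) - Real.log ((1 - x) / 2) := by
    rw [auxL, ← Real.log_div hp.ne' hq.ne']
    congr 1
    field_simp
  rw [hlog]; ring

private lemma aux_hFun_zero : hFun 0 = 1 := by
  have h2 : Real.log 2 ≠ 0 := aux_log2_pos.ne'
  have h : ((1:ℝ) + 0) / 2 = 2⁻¹ := by norm_num
  have h' : ((1:ℝ) - 0) / 2 = 2⁻¹ := by norm_num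
  simp only [hFun, h, h', Real.logb, Real.log_inv]
  field_simp
  norm_num

private lemma aux_hFun_one : hFun 1 = 0 := by
  have h : ((1:ℝ) + 1) / 2 = 1 := by norm_num
  have h' : ((1:ℝ) - 1) / 2 = 0 := by norm_num
  simp [hFun, h, h']

private lemma aux_hFun_anti : StrictAntiOn hFun (Set.Icc (0:ℝ) 1) := by
  apply strictAntiOn_of_deriv_neg (convex_Icc 0 1) aux_hFun_cont.continuousOn
  intro x hx
  rw [interior_Icc] at hx
  obtain ⟨hx1, hx2⟩ := hx
  rw [(aux_hFun_deriv (by linarith) hx2).deriv]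
  have hl : 0 < auxL x := by
    apply Real.log_pos
    rw [lt_div_iff₀ (by linarith : (0:ℝ) < 1 - x)]
    linarith
  exact div_neg_of_neg_of_pos (by linarith) (by linarith [aux_log2_pos])

private lemma aux_log_lt {r : ℝ} (hr : 1 < r) : Real.log r < r / 2 - 1 / (2 * r) := by
  have key : StrictMonoOn (fun y : ℝ => y / 2 - 1 / (2 * y) - Real.log y) (Set.Ici 1) := by
    apply strictMonoOn_of_deriv_pos (convex_Ici 1)
    · apply ContinuousOn.sub
      · apply ContinuousOn.sub
        · exact (continuous_id.div_const 2).continuousOn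
        · apply ContinuousOn.div continuousOn_const
            ((continuous_const.mul continuous_id).continuousOn)
          intro y hy
          have : (1:ℝ) ≤ y := hy
          show (2:ℝ) * y ≠ 0
          positivity
      · exact Real.continuousOn_log.mono (fun y hy => by
          simp only [Set.mem_compl_iff, Set.mem_singleton_iff]
          have : (1:ℝ) ≤ y := hy
          intro h; rw [h] at this; norm_num at this)
    · intro y hy
      rw [interior_Ici] at hy
      have hy1 : (1:ℝ) < y := hy
      have hy0 : (0:ℝ) < y := by linarith
      have d1 : HasDerivAt (fun z : ℝ => z / 2) (1 / 2) y := (hasDerivAt_id y).div_const 2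
      have d2 : HasDerivAt (fun z : ℝ => 1 / (2 * z)) (-2 / (2 * y) ^ 2) y := by
        have h := ((hasDerivAt_id y).const_mul (2:ℝ)).inv (by positivity)
        simp only [mul_one] at h
        rw [show (fun z : ℝ => 1 / (2 * z)) = (fun y => 2 * y)⁻¹ by funext z; simp]; exact h
      have d3 : HasDerivAt Real.log y⁻¹ y := Real.hasDerivAt_log hy0.ne'
      have D : HasDerivAt (fun y : ℝ => y / 2 - 1 / (2 * y) - Real.log y) (1 / 2 - -2 / (2 * y) ^ 2 - y⁻¹) y := (d1.sub d2).sub d3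
      rw [D.deriv]
      have heq : 1 / 2 - -2 / (2 * y) ^ 2 - y⁻¹ = (y - 1) ^ 2 / (2 * y ^ 2) := by
        field_simp
        ring
      rw [heq]
      exact div_pos (pow_pos (by linarith) 2) (by positivity)
  have h0 := key (Set.self_mem_Ici) (Set.mem_Ici.2 hr.le) hr
  simp only [Real.log_one] at h0
  norm_num at h0
  have hr0 : r ≠ 0 := by linarith
  have he : r⁻¹ * (1 / 2) = 1 / (2 * r) := by field_simp
  linarith

private lemma aux_L_deriv {x : ℝ} (h1 : -1 < x) (h2 : x < 1) :
    HasDerivAt auxL (2 / (1 - x ^ 2)) x := by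
  have ha : (1:ℝ) - x ≠ 0 := by linarith
  have hb : (1:ℝ) + x ≠ 0 := by linarith
  have hd : HasDerivAt (fun y : ℝ => (1 + y) / (1 - y)) (2 / (1 - x) ^ 2) x := by
    have dnum : HasDerivAt (fun y : ℝ => 1 + y) 1 x := by
      simpa using (hasDerivAt_id x).const_add (1:ℝ)
    have dden : HasDerivAt (fun y : ℝ => 1 - y) (-1) x := by
      have h := ((hasDerivAt_id x).neg).const_add (1:ℝ)
      simp only [sub_eq_add_neg]
      simpa using h
    have h := dnum.div dden ha
    refine h.congr_deriv ?_
    field_simp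
    ring
  have hpos : (0:ℝ) < (1 + x) / (1 - x) := div_pos (by linarith) (by linarith)
  have h := hd.log hpos.ne'
  have : HasDerivAt auxL (2 / (1 - x) ^ 2 / ((1 + x) / (1 - x))) x := h
  convert this using 1
  have hc : (1:ℝ) - x ^ 2 ≠ 0 := by
    intro h
    exact (mul_ne_zero ha hb) (by linear_combination h)
  field_simp
  ring

private lemma aux_K_lt {x y : ℝ} (hx : 0 < x) (hxy : x < y) (hy : y < 1) :
    auxL x / x < auxL y / y := by
  have key : StrictMonoOn (fun z : ℝ => auxL z / z) (Set.Ioo 0 1) := by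
    apply strictMonoOn_of_deriv_pos (convex_Ioo 0 1)
    · intro z hz
      have did : HasDerivAt (fun y : ℝ => y) 1 z := hasDerivAt_id z
      exact ((aux_L_deriv (by linarith [hz.1]) hz.2).div did
        hz.1.ne').continuousAt.continuousWithinAt
    · intro z hz
      rw [interior_Ioo] at hz
      obtain ⟨hz0, hz1⟩ := hz
      have did : HasDerivAt (fun y : ℝ => y) 1 z := hasDerivAt_id z
      have D : HasDerivAt (fun z => auxL z / z) ((2 / (1 - z ^ 2) * z - auxL z * 1) / z ^ 2) z := (aux_L_deriv (by linarith) hz1).div did hz0.ne'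
      rw [D.deriv]
      have h12 : (0:ℝ) < 1 - z ^ 2 := by nlinarith
      have hr : 1 < (1 + z) / (1 - z) := by
        rw [lt_div_iff₀ (by linarith)]; linarith
      have hlt : auxL z < 2 * z / (1 - z ^ 2) := by
        have h := aux_log_lt hr
        have heq : (1 + z) / (1 - z) / 2 - 1 / (2 * ((1 + z) / (1 - z)))
            = 2 * z / (1 - z ^ 2) := by
          have ha : (1:ℝ) - z ≠ 0 := by linarith
          have hb : (1:ℝ) + z ≠ 0 := by linarith
          field_simp
          ring
        rw [heq] at h
        exact h
      apply div_pos
      · have he : 2 / (1 - z ^ 2) * z = 2 * z / (1 - z ^ 2) := by ring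
        nlinarith [hlt, he]
      · positivity
  exact key ⟨hx, hxy.trans hy⟩ ⟨hx.trans hxy, hy⟩ hxy

private lemma aux_auxL_pos {u : ℝ} (h0 : 0 < u) (h1 : u < 1) : 0 < auxL u := by
  apply Real.log_pos
  rw [lt_div_iff₀ (by linarith)]
  linarith

private lemma aux_gFun_spec {y : ℝ} (hy : y ∈ Set.Icc (0:ℝ) 1) :
    gFun y ∈ Set.Icc (0:ℝ) 1 ∧ hFun (gFun y) = y := by
  have hsub := intermediate_value_Icc' (by norm_num : (0:ℝ) ≤ 1) aux_hFun_cont.continuousOn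
  rw [aux_hFun_one, aux_hFun_zero] at hsub
  obtain ⟨a, haI, hfa⟩ := hsub hy
  have hex : ∃ a ∈ Set.Icc (0:ℝ) 1, hFun a = y := ⟨a, haI, hfa⟩
  exact ⟨Function.invFunOn_mem hex, Function.invFunOn_eq hex⟩

private lemma aux_trig {x : ℝ} (h1 : 0 < x) (h2 : x < Real.pi / 2) :
    0 < Real.sin x ∧ Real.sin x < 1 ∧ 0 < Real.cos x ∧ Real.cos x < 1 := by
  have hπ := Real.pi_pos
  have hs : 0 < Real.sin x := Real.sin_pos_of_pos_of_lt_pi h1 (by linarith)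
  have hc : 0 < Real.cos x := Real.cos_pos_of_mem_Ioo ⟨by linarith, h2⟩
  have hsc := Real.sin_sq_add_cos_sq x
  exact ⟨hs, by nlinarith, hc, by nlinarith⟩

private lemma aux_X_deriv {x : ℝ} (h1 : 0 < x) (h2 : x < Real.pi / 2) :
    HasDerivAt (fun ψ : ℝ => hFun (Real.sin ψ))
      (-(Real.cos x * (auxL (Real.sin x) / (2 * Real.log 2)))) x := by
  obtain ⟨hs0, hs1, hc0, hc1⟩ := aux_trig h1 h2
  have h := (aux_hFun_deriv (by linarith : -1 < Real.sin x) hs1).comp x (Real.hasDerivAt_sin x)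
  refine h.congr_deriv ?_
  ring

private lemma aux_Y_deriv {x : ℝ} (h1 : 0 < x) (h2 : x < Real.pi / 2) :
    HasDerivAt (fun ψ : ℝ => hFun (Real.cos ψ))
      (Real.sin x * (auxL (Real.cos x) / (2 * Real.log 2))) x := by
  obtain ⟨hs0, hs1, hc0, hc1⟩ := aux_trig h1 h2
  have h := (aux_hFun_deriv (by linarith : -1 < Real.cos x) hc1).comp x (Real.hasDerivAt_cos x)
  refine h.congr_deriv ?_
  ring

end AuxStmt15

set_option maxHeartbeats 2000000 in
/-- For every `θ ∈ (0, π/2)`, with `N_θ = (cos θ + h(sin θ))/(1 + cos θ)` and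
`D_θ = h(cos θ)/(1 + cos θ)`, one has `g(N_θ)² + g(D_θ)² > 1`. -/
theorem stmt_15 (θ : ℝ) (hθ : θ ∈ Set.Ioo 0 (Real.pi / 2)) :
    1 < gFun ((Real.cos θ + hFun (Real.sin θ)) / (1 + Real.cos θ)) ^ 2 +
        gFun (hFun (Real.cos θ) / (1 + Real.cos θ)) ^ 2 := by
  obtain ⟨hθ0, hθ2⟩ := hθ
  obtain ⟨hs0, hs1, hc0, hc1⟩ := aux_trig hθ0 hθ2
  have hπ := Real.pi_pos
  have hscsq := Real.sin_sq_add_cos_sq θ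
  set s := Real.sin θ with hsdef
  set c := Real.cos θ with hcdef
  set Hs := hFun s with hHsdef
  set Hc := hFun c with hHcdef
  set N := (c + Hs) / (1 + c) with hNdef
  set D := Hc / (1 + c) with hDdef
  have h0I : (0:ℝ) ∈ Set.Icc (0:ℝ) 1 := by norm_num
  have h1I : (1:ℝ) ∈ Set.Icc (0:ℝ) 1 := by norm_num
  have hsI : s ∈ Set.Icc (0:ℝ) 1 := ⟨hs0.le, hs1.le⟩
  have hcI : c ∈ Set.Icc (0:ℝ) 1 := ⟨hc0.le, hc1.le⟩
  have hHs1 : Hs < 1 := by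
    have := aux_hFun_anti h0I hsI hs0
    rwa [aux_hFun_zero] at this
  have hHs0 : 0 < Hs := by
    have := aux_hFun_anti hsI h1I hs1
    rwa [aux_hFun_one] at this
  have hHc1 : Hc < 1 := by
    have := aux_hFun_anti h0I hcI hc0
    rwa [aux_hFun_zero] at this
  have hHc0 : 0 < Hc := by
    have := aux_hFun_anti hcI h1I hc1
    rwa [aux_hFun_one] at this
  have h1c : (0:ℝ) < 1 + c := by linarith
  have hN1 : N < 1 := by
    rw [hNdef, div_lt_one h1c]; linarith
  have hNgtHs : Hs < N := by
    rw [hNdef, lt_div_iff₀ h1c]; nlinarith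
  have hN0 : 0 < N := by
    rw [hNdef]; exact div_pos (by linarith) h1c
  have hNI : N ∈ Set.Icc (0:ℝ) 1 := ⟨hN0.le, hN1.le⟩
  have hD0 : 0 < D := by
    rw [hDdef]; exact div_pos hHc0 h1c
  have hD1 : D < 1 := by rw [hDdef, div_lt_one h1c]; linarith
  have hDI : D ∈ Set.Icc (0:ℝ) 1 := ⟨hD0.le, hD1.le⟩
  obtain ⟨haI, hha⟩ := aux_gFun_spec hNI
  obtain ⟨hbI, hhb⟩ := aux_gFun_spec hDI
  set a := gFun N with hadef
  set b := gFun D with hbdef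
  have ha0 : 0 < a := by
    have h : hFun a < hFun 0 := by rw [hha, aux_hFun_zero]; exact hN1
    exact (aux_hFun_anti.lt_iff_gt haI h0I).1 h
  have has : a < s := by
    have h : hFun s < hFun a := by rw [hha]; exact hNgtHs
    exact (aux_hFun_anti.lt_iff_gt hsI haI).1 h
  have ha1 : a ≤ 1 := haI.2
  clear_value s c Hs Hc N D a b
  set t := Real.sqrt (1 - a ^ 2) with htdef
  have ht2 : t ^ 2 = 1 - a ^ 2 := Real.sq_sqrt (by nlinarith)
  have ht0 : 0 ≤ t := Real.sqrt_nonneg _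
  clear_value t
  have ha2 : 0 < a ^ 2 := pow_pos ha0 2
  have ht1' : t < 1 := by
    have h : t ^ 2 < 1 ^ 2 := by rw [one_pow]; linarith
    exact lt_of_pow_lt_pow_left₀ 2 (by norm_num) h
  have ht1 : t ≤ 1 := ht1'.le
  have htc : c < t := by
    have h2 : a ^ 2 < s ^ 2 := by
      have := pow_lt_pow_left₀ has ha0.le (by norm_num : (2:ℕ) ≠ 0)
      simpa using this
    have hct : c ^ 2 < t ^ 2 := by linarith
    exact lt_of_pow_lt_pow_left₀ 2 ht0 hct
  have htI : t ∈ Set.Icc (0:ℝ) 1 := ⟨ht0, ht1⟩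
  set Ht := hFun t with hHtdef
  clear_value Ht
  set ψ := Real.arcsin a with hψdef
  have hψ0 : 0 < ψ := by rw [hψdef]; exact Real.arcsin_pos.2 ha0
  have hψθ : ψ < θ := by
    have h := Real.strictMonoOn_arcsin ⟨by linarith, ha1⟩ ⟨by linarith, hs1.le⟩ has
    rwa [hsdef, Real.arcsin_sin (by linarith) (by linarith)] at h
  have hsinψ : Real.sin ψ = a := by rw [hψdef]; exact Real.sin_arcsin (by linarith) ha1
  have hcosψ : Real.cos ψ = t := by rw [hψdef, Real.cos_arcsin, ← htdef]
  clear_value ψ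
  have hl2 : (0:ℝ) < 2 * Real.log 2 := by linarith [aux_log2_pos]
  have hcontX : Continuous (fun x : ℝ => hFun (Real.sin x)) :=
    aux_hFun_cont.comp Real.continuous_sin
  have hcontY : Continuous (fun x : ℝ => hFun (Real.cos x)) :=
    aux_hFun_cont.comp Real.continuous_cos
  obtain ⟨ξ, hξmem, hξ⟩ := exists_ratio_hasDerivAt_eq_ratio_slope
    (fun x : ℝ => hFun (Real.cos x))
    (fun x : ℝ => Real.sin x * (auxL (Real.cos x) / (2 * Real.log 2)))
    hψθ hcontY.continuousOn
    (fun x hx => aux_Y_deriv (hψ0.trans hx.1) (hx.2.trans hθ2))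
    (fun x : ℝ => hFun (Real.sin x))
    (fun x : ℝ => -(Real.cos x * (auxL (Real.sin x) / (2 * Real.log 2))))
    hcontX.continuousOn
    (fun x hx => aux_X_deriv (hψ0.trans hx.1) (hx.2.trans hθ2))
  obtain ⟨η, hηmem, hη⟩ := exists_ratio_hasDerivAt_eq_ratio_slope
    (fun x : ℝ => hFun (Real.cos x))
    (fun x : ℝ => Real.sin x * (auxL (Real.cos x) / (2 * Real.log 2)))
    hψ0 hcontY.continuousOn
    (fun x hx => aux_Y_deriv hx.1 ((hx.2.trans hψθ).trans hθ2))
    (fun x : ℝ => hFun (Real.sin x))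
    (fun x : ℝ => -(Real.cos x * (auxL (Real.sin x) / (2 * Real.log 2))))
    hcontX.continuousOn
    (fun x hx => aux_X_deriv hx.1 ((hx.2.trans hψθ).trans hθ2))
  obtain ⟨hξ1, hξ2⟩ := hξmem
  obtain ⟨hη1, hη2⟩ := hηmem
  have hξθ2 : ξ < Real.pi / 2 := hξ2.trans hθ2
  have hηθ2 : η < Real.pi / 2 := ((hη2.trans hψθ).trans hθ2)
  have hη0 : 0 < η := hη1
  have hξ0 : 0 < ξ := hψ0.trans hξ1
  obtain ⟨hsξ0, hsξ1, hcξ0, hcξ1⟩ := aux_trig hξ0 hξθ2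
  obtain ⟨hsη0, hsη1, hcη0, hcη1⟩ := aux_trig hη0 hηθ2
  -- rewrite the MVT equations
  simp only [hsinψ, hcosψ, Real.sin_zero, Real.cos_zero, aux_hFun_zero, aux_hFun_one,
    ← hsdef, ← hcdef, ← hHsdef, ← hHcdef, ← hHtdef, hha] at hξ hη
  -- abbreviations for the four positive quantities
  set Q1 := Real.sin ξ * (auxL (Real.cos ξ) / (2 * Real.log 2)) with hQ1def
  set P1 := Real.cos ξ * (auxL (Real.sin ξ) / (2 * Real.log 2)) with hP1def
  set Q2 := Real.sin η * (auxL (Real.cos η) / (2 * Real.log 2)) with hQ2def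
  set P2 := Real.cos η * (auxL (Real.sin η) / (2 * Real.log 2)) with hP2def
  have hQ1 : 0 < Q1 := mul_pos hsξ0 (div_pos (aux_auxL_pos hcξ0 hcξ1) hl2)
  have hP1 : 0 < P1 := mul_pos hcξ0 (div_pos (aux_auxL_pos hsξ0 hsξ1) hl2)
  have hQ2 : 0 < Q2 := mul_pos hsη0 (div_pos (aux_auxL_pos hcη0 hcη1) hl2)
  have hP2 : 0 < P2 := mul_pos hcη0 (div_pos (aux_auxL_pos hsη0 hsη1) hl2)
  clear_value Q1 P1 Q2 P2
  have E1 : (N - Hs) * Q1 = (Hc - Ht) * P1 := by linarith only [hξ]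
  have E2 : (1 - N) * Q2 = Ht * P2 := by linarith only [hη]
  -- the cross inequality from monotonicity of K
  have hηξ : η < ξ := hη2.trans hξ1
  have hsin_lt : Real.sin η < Real.sin ξ := by
    apply Real.strictMonoOn_sin ⟨by linarith only [hπ, hη0], by linarith only [hηθ2]⟩
      ⟨by linarith only [hπ, hξ0], by linarith only [hξθ2]⟩ hηξ
  have hcos_lt : Real.cos ξ < Real.cos η := by
    apply Real.strictAntiOn_cos ⟨by linarith only [hη0], by linarith only [hπ, hηθ2]⟩
      ⟨by linarith only [hξ0], by linarith only [hπ, hξθ2]⟩ hηξ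
  have K1 : auxL (Real.cos ξ) / Real.cos ξ < auxL (Real.cos η) / Real.cos η :=
    aux_K_lt hcξ0 hcos_lt hcη1
  have K2 : auxL (Real.sin η) / Real.sin η < auxL (Real.sin ξ) / Real.sin ξ :=
    aux_K_lt hsη0 hsin_lt hsξ1
  have A : auxL (Real.cos ξ) * Real.cos η < auxL (Real.cos η) * Real.cos ξ :=
    (div_lt_div_iff₀ hcξ0 hcη0).1 K1
  have B : auxL (Real.sin η) * Real.sin ξ < auxL (Real.sin ξ) * Real.sin η :=
    (div_lt_div_iff₀ hsη0 hsξ0).1 K2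
  have hraw : (auxL (Real.cos ξ) * Real.cos η) * (auxL (Real.sin η) * Real.sin ξ)
      < (auxL (Real.cos η) * Real.cos ξ) * (auxL (Real.sin ξ) * Real.sin η) :=
    mul_lt_mul'' A B (mul_nonneg (aux_auxL_pos hcξ0 hcξ1).le hcη0.le)
      (mul_nonneg (aux_auxL_pos hsη0 hsη1).le hsξ0.le)
  have hl2ne : (2 * Real.log 2) ≠ 0 := hl2.ne'
  have eQ1 : (2 * Real.log 2) * Q1 = Real.sin ξ * auxL (Real.cos ξ) := by
    rw [hQ1def]; field_simp
  have eP1 : (2 * Real.log 2) * P1 = Real.cos ξ * auxL (Real.sin ξ) := by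
    rw [hP1def]; field_simp
  have eQ2 : (2 * Real.log 2) * Q2 = Real.sin η * auxL (Real.cos η) := by
    rw [hQ2def]; field_simp
  have eP2 : (2 * Real.log 2) * P2 = Real.cos η * auxL (Real.sin η) := by
    rw [hP2def]; field_simp
  have hmul : ((2 * Real.log 2) * Q1) * ((2 * Real.log 2) * P2)
      < ((2 * Real.log 2) * Q2) * ((2 * Real.log 2) * P1) := by
    rw [eQ1, eP2, eQ2, eP1]
    linarith only [hraw]
  have hl2sq : (0:ℝ) < (2 * Real.log 2) * (2 * Real.log 2) := mul_pos hl2 hl2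
  have cross : Q1 * P2 < Q2 * P1 :=
    lt_of_mul_lt_mul_right
      (show (Q1 * P2) * ((2 * Real.log 2) * (2 * Real.log 2))
          < (Q2 * P1) * ((2 * Real.log 2) * (2 * Real.log 2)) by linarith only [hmul])
      hl2sq.le
  -- combine
  have hNHs' : 0 < N - Hs := by linarith
  have h1N' : 0 < 1 - N := by linarith
  have c1 : ((N - Hs) * (1 - N)) * (Q1 * P2) < ((N - Hs) * (1 - N)) * (Q2 * P1) :=
    mul_lt_mul_of_pos_left cross (mul_pos hNHs' h1N')
  have e1' : (N - Hs) * (1 - N) * (Q1 * P2) = (1 - N) * ((Hc - Ht) * (P1 * P2)) := by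
    linear_combination ((1 - N) * P2) * E1
  have e2' : (N - Hs) * (1 - N) * (Q2 * P1) = (N - Hs) * (Ht * (P1 * P2)) := by
    linear_combination ((N - Hs) * P1) * E2
  have key0 : ((1 - N) * (Hc - Ht)) * (P1 * P2) < ((N - Hs) * Ht) * (P1 * P2) := by
    linarith only [c1, e1', e2']
  have hPP : (0:ℝ) < P1 * P2 := mul_pos hP1 hP2
  have key : (1 - N) * (Hc - Ht) < (N - Hs) * Ht := lt_of_mul_lt_mul_right key0 hPP.le
  have hfin : Hc * (1 - N) < Ht * (1 - Hs) := by linarith only [key]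
  have h1Nc : (1 - N) * (1 + c) = 1 - Hs := by
    rw [hNdef]; field_simp; ring
  have e3 : Ht * (1 - Hs) = Ht * (1 + c) * (1 - N) := by rw [← h1Nc]; ring
  have h2 : Hc * (1 - N) < Ht * (1 + c) * (1 - N) := by linarith only [hfin, e3]
  have hHcHt : Hc < Ht * (1 + c) := lt_of_mul_lt_mul_right h2 h1N'.le
  have hDlt : D < Ht := by
    rw [hDdef, div_lt_iff₀ h1c]; linarith only [hHcHt]
  have htb : t < b := by
    have hlt : hFun b < hFun t := by rw [hhb, ← hHtdef]; exact hDlt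
    exact (aux_hFun_anti.lt_iff_gt hbI htI).1 hlt
  have hb2 : t ^ 2 < b ^ 2 := by
    apply pow_lt_pow_left₀ htb ht0
    norm_num
  linarith only [ht2, hb2]
end

section
/- Let (M_m)_m be a POVM on ℂ^d, let (τ_m)_m be d×d density matrices (the states prepared by a measure-and-prepare instrument after an arbitrary correction), and let B be an observable with orthonormal eigenbasis (|b⟩)_b of ℂ^d. Define the joint distribution p(b, b') = (1/d)·Σ_m ⟨b|M_m|b⟩·⟨b'|τ_m|b'⟩. Then the corrected disturbance D_E(M,B) = H(𝔹|𝔹') computed from p(b,b') satisfies D_E(M,B) ≥ N(M,B). (That is, for measure-and-prepare instruments the disturbance on B is at least the noise on B, for any correction.) -/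
open Matrix
open scoped ComplexOrder

section Aux
open Finset

/-- Log-sum inequality (natural log), with `w ≤ u` termwise.. -/
lemma logsum {ι : Type*} [Fintype ι] (w u : ι → ℝ) (hw : ∀ i, 0 ≤ w i)
    (hwu : ∀ i, w i ≤ u i) :
    (∑ i, w i) * Real.log ((∑ i, w i) / (∑ i, u i)) ≤
      ∑ i, w i * Real.log (w i / u i) := by
  have hu : ∀ i, 0 ≤ u i := fun i => (hw i).trans (hwu i)
  set W := ∑ i, w i
  set U := ∑ i, u i
  have hU0 : 0 ≤ U := Finset.sum_nonneg fun i _ => hu i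
  rcases eq_or_lt_of_le hU0 with hU | hU
  · -- U = 0 ⇒ all u = 0 ⇒ all w = 0
    have hu0 : ∀ i ∈ Finset.univ, u i = 0 :=
      (Finset.sum_eq_zero_iff_of_nonneg (fun i _ => hu i)).mp hU.symm
    have hw0 : ∀ i, w i = 0 := fun i => le_antisymm ((hwu i).trans_eq (hu0 i (mem_univ i))) (hw i)
    have : W = 0 := Finset.sum_eq_zero fun i _ => hw0 i
    simp [this, hw0]
  · -- Jensen with f(t) = t log t
    have key := Real.convexOn_mul_log.map_centerMass_le (t := Finset.univ)
      (w := u) (p := fun i => w i / u i) (fun i _ => hu i) hU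
      (fun i _ => div_nonneg (hw i) (hu i))
    have hcm : Finset.univ.centerMass u (fun i => w i / u i) = W / U := by
      rw [Finset.centerMass]
      have : ∑ i, u i • (w i / u i) = W := by
        refine Finset.sum_congr rfl fun i _ => ?_
        rcases eq_or_ne (u i) 0 with h | h
        · have : w i = 0 := le_antisymm ((hwu i).trans_eq h) (hw i)
          simp [h, this]
        · rw [smul_eq_mul]; field_simp
      rw [this, smul_eq_mul, inv_mul_eq_div]
    have hcm2 : Finset.univ.centerMass u ((fun x => x * Real.log x) ∘ fun i => w i / u i)
        = U⁻¹ * ∑ i, w i * Real.log (w i / u i) := by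
      rw [Finset.centerMass, smul_eq_mul]
      congr 1
      refine Finset.sum_congr rfl fun i _ => ?_
      rcases eq_or_ne (u i) 0 with h | h
      · have : w i = 0 := le_antisymm ((hwu i).trans_eq h) (hw i)
        simp [h, this]
      · simp only [Function.comp, smul_eq_mul]
        field_simp
    rw [hcm, hcm2] at key
    have := mul_le_mul_of_nonneg_left key hU0
    calc W * Real.log (W / U) = U * (W / U * Real.log (W / U)) := by field_simp
    _ ≤ U * (U⁻¹ * ∑ i, w i * Real.log (w i / u i)) := this
    _ = ∑ i, w i * Real.log (w i / u i) := by field_simp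

lemma logsum2 {ι : Type*} [Fintype ι] (w u : ι → ℝ) (hw : ∀ i, 0 ≤ w i)
    (hwu : ∀ i, w i ≤ u i) :
    (∑ i, w i) * Real.logb 2 ((∑ i, w i) / (∑ i, u i)) ≤
      ∑ i, w i * Real.logb 2 (w i / u i) := by
  have h := logsum w u hw hwu
  have h2 : (0:ℝ) < Real.log 2 := Real.log_pos one_lt_two
  simp only [Real.logb, ← mul_div_assoc]
  rw [← Finset.sum_div]
  gcongr

lemma onb_colsum {d : ℕ} {v : Fin d → Fin d → ℂ} (hB : IsONB v) (j k : Fin d) :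
    ∑ b, (starRingEnd ℂ) (v b j) * v b k = if j = k then 1 else 0 := by
  set U : Matrix (Fin d) (Fin d) ℂ := Matrix.of v with hUdef
  have h1 : U * Uᴴ = 1 := by
    ext i j
    have h := hB j i
    simp only [dotProduct, Pi.star_apply, Complex.star_def] at h
    simp only [Matrix.mul_apply, Matrix.conjTranspose_apply, Matrix.one_apply, hUdef,
      Matrix.of_apply, Complex.star_def]
    rw [show (∑ x, v i x * (starRingEnd ℂ) (v j x)) = ∑ x, (starRingEnd ℂ) (v j x) * v i x from
      Finset.sum_congr rfl fun x _ => mul_comm _ _, h]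
    simp [eq_comm]
  have h2 : Uᴴ * U = 1 := mul_eq_one_comm.mp h1
  simpa [Matrix.mul_apply, Matrix.conjTranspose_apply, Matrix.one_apply, hUdef,
    Complex.star_def] using congrFun (congrFun h2 j) k

lemma onb_trace {d : ℕ} {v : Fin d → Fin d → ℂ} (hB : IsONB v)
    (X : Matrix (Fin d) (Fin d) ℂ) :
    ∑ b, star (v b) ⬝ᵥ X.mulVec (v b) = X.trace := by
  have key : ∀ b, star (v b) ⬝ᵥ X.mulVec (v b)
      = ∑ j, ∑ k, X j k * ((starRingEnd ℂ) (v b j) * v b k) := by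
    intro b
    simp only [dotProduct, Matrix.mulVec, dotProduct, Pi.star_apply, Complex.star_def,
      Finset.mul_sum]
    exact Finset.sum_congr rfl fun j _ => Finset.sum_congr rfl fun k _ => by ring
  simp only [key]
  rw [Finset.sum_comm, Matrix.trace]
  refine Finset.sum_congr rfl fun j _ => ?_
  rw [Finset.sum_comm]
  rw [Finset.sum_congr rfl fun k _ => by rw [← Finset.mul_sum, onb_colsum hB j k]]
  simp [Matrix.diag]

lemma qform_sum {d : ℕ} {v : Fin d → Fin d → ℂ} (hB : IsONB v)
    (X : Matrix (Fin d) (Fin d) ℂ) : ∑ b, qform X (v b) = X.trace.re := by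
  rw [← onb_trace hB X, Complex.re_sum]
  rfl

lemma qform_nonneg {d : ℕ} {X : Matrix (Fin d) (Fin d) ℂ} (hX : X.PosSemidef)
    (v : Fin d → ℂ) : 0 ≤ qform X v := by
  have := hX.dotProduct_mulVec_nonneg v
  rw [Complex.le_def] at this
  simpa [qform] using this.1

lemma main_abstract {ι B : Type*} [Fintype ι] [Fintype B]
    (a c : ι → B → ℝ) (ha : ∀ m b, 0 ≤ a m b) (hc : ∀ m b, 0 ≤ c m b)
    (hcsum : ∀ m, ∑ b, c m b = 1) :
    -∑ m, ∑ b, a m b * Real.logb 2 (a m b / ∑ b'', a m b'')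
      ≤ condEnt (fun b b' => ∑ m, a m b * c m b') := by
  rw [condEnt, neg_le_neg_iff]
  have step1 : ∀ m b, a m b * Real.logb 2 (a m b / ∑ b'', a m b'')
      = ∑ b', (a m b * c m b') * Real.logb 2 (a m b / ∑ b'', a m b'') := by
    intro m b
    rw [← Finset.sum_mul, ← Finset.mul_sum, hcsum m, mul_one]
  calc ∑ b, ∑ b', (∑ m, a m b * c m b') *
        Real.logb 2 ((∑ m, a m b * c m b') / ∑ b'', ∑ m, a m b'' * c m b')
      ≤ ∑ b, ∑ b', ∑ m, (a m b * c m b') * Real.logb 2 (a m b / ∑ b'', a m b'') := by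
        refine Finset.sum_le_sum fun b _ => Finset.sum_le_sum fun b' _ => ?_
        -- per-(b,b') log-sum inequality
        set w : ι → ℝ := fun m => a m b * c m b' with hw_def
        set u : ι → ℝ := fun m => (∑ b'', a m b'') * c m b' with hu_def
        have hw : ∀ m, 0 ≤ w m := fun m => mul_nonneg (ha m b) (hc m b')
        have haA : ∀ m, a m b ≤ ∑ b'', a m b'' :=
          fun m => Finset.single_le_sum (fun b'' _ => ha m b'') (mem_univ b)
        have hwu : ∀ m, w m ≤ u m :=
          fun m => mul_le_mul_of_nonneg_right (haA m) (hc m b')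
        have hUs : (∑ b'', ∑ m, a m b'' * c m b') = ∑ m, u m := by
          rw [Finset.sum_comm]
          exact Finset.sum_congr rfl fun m _ => by rw [hu_def, ← Finset.sum_mul]
        have key := logsum2 w u hw hwu
        have hterm : ∀ m, w m * Real.logb 2 (w m / u m)
            = (a m b * c m b') * Real.logb 2 (a m b / ∑ b'', a m b'') := by
          intro m
          rcases eq_or_ne (w m) 0 with h | h
          · rw [h]
            have : a m b * c m b' = 0 := h
            rw [this]
            ring
          · have hm := mul_ne_zero_iff.mp h
            have hc' : c m b' ≠ 0 := hm.2
            have : w m / u m = a m b / ∑ b'', a m b'' := by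
              rw [hw_def, hu_def]
              exact mul_div_mul_right _ _ hc'
            rw [this]
        rw [hUs]
        calc (∑ m, w m) * Real.logb 2 ((∑ m, w m) / ∑ m, u m)
            ≤ ∑ m, w m * Real.logb 2 (w m / u m) := key
          _ = ∑ m, (a m b * c m b') * Real.logb 2 (a m b / ∑ b'', a m b'') :=
            Finset.sum_congr rfl fun m _ => hterm m
    _ = ∑ b, ∑ m, ∑ b', (a m b * c m b') * Real.logb 2 (a m b / ∑ b'', a m b'') :=
        Finset.sum_congr rfl fun b _ => Finset.sum_comm
    _ = ∑ m, ∑ b, ∑ b', (a m b * c m b') * Real.logb 2 (a m b / ∑ b'', a m b'') :=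
        Finset.sum_comm
    _ = ∑ m, ∑ b, a m b * Real.logb 2 (a m b / ∑ b'', a m b'') :=
        Finset.sum_congr rfl fun m _ => Finset.sum_congr rfl fun b _ => (step1 m b).symm

/-- For a measure-and-prepare instrument given by a POVM `(M_m)` and prepared states `(τ_m)`,
with joint distribution `p(b,b') = (1/d)·Σ_m ⟨b|M_m|b⟩·⟨b'|τ_m|b'⟩`, the corrected disturbance
`D_E(M,B) = H(𝔹|𝔹')` satisfies `D_E(M,B) ≥ N(M,B)`. -/
theorem stmt_19 {d : ℕ} (hd : 0 < d) {ι : Type*} [Fintype ι]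
    (M : ι → Matrix (Fin d) (Fin d) ℂ) (hM : IsPOVM M)
    (τ : ι → Matrix (Fin d) (Fin d) ℂ) (hτ : ∀ m, IsDensity (τ m))
    (vB : Fin d → Fin d → ℂ) (hB : IsONB vB) :
    noise M vB ≤ condEnt (fun b b' : Fin d =>
      (1 / (d : ℝ)) * ∑ m, qform (M m) (vB b) * qform (τ m) (vB b')) := by
  obtain ⟨hMpsd, _⟩ := hM
  have e2 : (fun (b b' : Fin d) =>
      (1 / (d : ℝ)) * ∑ m, qform (M m) (vB b) * qform (τ m) (vB b'))
      = fun b b' => ∑ m, ((1/(d:ℝ)) * qform (M m) (vB b)) * qform (τ m) (vB b') := by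
    funext b b'
    rw [Finset.mul_sum]
    exact Finset.sum_congr rfl fun m _ => by ring
  have e1 : noise M vB = -∑ m, ∑ b, ((1/(d:ℝ)) * qform (M m) (vB b)) *
      Real.logb 2 (((1/(d:ℝ)) * qform (M m) (vB b)) /
        ∑ b'', (1/(d:ℝ)) * qform (M m) (vB b'')) := by
    rw [noise]
    refine congrArg Neg.neg (Finset.sum_congr rfl fun m _ =>
      Finset.sum_congr rfl fun b _ => ?_)
    rw [show (∑ b'', (1/(d:ℝ)) * qform (M m) (vB b'')) = (1/(d:ℝ)) * (M m).trace.re by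
      rw [← Finset.mul_sum, qform_sum hB]]
  rw [e2, e1]
  refine main_abstract _ _ (fun m b => mul_nonneg (by positivity) (qform_nonneg (hMpsd m) _))
    (fun m b => qform_nonneg (hτ m).1 _) (fun m => ?_)
  rw [qform_sum hB, (hτ m).2, Complex.one_re]

end Aux
end
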